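/- arXiv:2506.02156 — 3 statements merged into one kernel-verified Lean document; each statement's English description precedes it below -/
import Mathlib

section
/- With the MGA model above, the chi-square statistic satisfies $\sum_{k=0}^d \frac{\mathbb{E}[(O^k - Y^k)^2]}{Y^k} = \frac{m^2}{n}\left(\frac{1}{P_{l_g}} - 1\right) + \frac{(n-m)(d+1-1)}{n}$, i.e., equals $\frac{m^2}{n}\left(\frac{1}{P_{l_g}}-1\right) + \frac{(n-m)\,d}{n}$ when $\sum_{k=0}^d P_k = 1$. -/
open Finset

private lemma bsum0 (N : ℕ) (x y : ℝ) :
    ∑ j ∈ range (N + 1), (N.choose j : ℝ) * x ^ j * y ^ (N - j) = (x + y) ^ N := by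
  rw [add_pow]
  exact Finset.sum_congr rfl fun j _ => by ring

private lemma bsum1 (N : ℕ) (x y : ℝ) :
    ∑ j ∈ range (N + 1), (j : ℝ) * (N.choose j : ℝ) * x ^ j * y ^ (N - j)
      = N * x * (x + y) ^ (N - 1) := by
  cases N with
  | zero => simp
  | succ M =>
    rw [Finset.sum_range_succ']
    have hstep : ∀ i ∈ range (M + 1),
        ((i : ℝ) + 1) * ((M + 1).choose (i + 1) : ℝ) * x ^ (i + 1) * y ^ (M + 1 - (i + 1))
          = ((M : ℝ) + 1) * x * ((M.choose i : ℝ) * x ^ i * y ^ (M - i)) := by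
      intro i _
      have h := Nat.add_one_mul_choose_eq M i
      have h' : ((M : ℝ) + 1) * (M.choose i : ℝ) = ((M + 1).choose (i + 1) : ℝ) * ((i : ℝ) + 1) := by
        exact_mod_cast congrArg (Nat.cast : ℕ → ℝ) h
      have hexp : M + 1 - (i + 1) = M - i := by omega
      rw [hexp, pow_succ]
      linear_combination (-(x ^ i * x * y ^ (M - i))) * h'
    simp only [Nat.cast_add, Nat.cast_one] at hstep ⊢
    rw [Finset.sum_congr rfl hstep, ← Finset.mul_sum, bsum0]
    simp

private lemma bsum2 (N : ℕ) (x y : ℝ) :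
    ∑ j ∈ range (N + 1), (j : ℝ) * ((j : ℝ) - 1) * (N.choose j : ℝ) * x ^ j * y ^ (N - j)
      = N * ((N : ℝ) - 1) * x ^ 2 * (x + y) ^ (N - 2) := by
  cases N with
  | zero => simp
  | succ M =>
    rw [Finset.sum_range_succ']
    have hstep : ∀ i ∈ range (M + 1),
        ((i : ℝ) + 1) * (((i : ℝ) + 1) - 1) * ((M + 1).choose (i + 1) : ℝ) * x ^ (i + 1)
            * y ^ (M + 1 - (i + 1))
          = ((M : ℝ) + 1) * x * ((i : ℝ) * (M.choose i : ℝ) * x ^ i * y ^ (M - i)) := by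
      intro i _
      have h := Nat.add_one_mul_choose_eq M i
      have h' : ((M : ℝ) + 1) * (M.choose i : ℝ) = ((M + 1).choose (i + 1) : ℝ) * ((i : ℝ) + 1) := by
        exact_mod_cast congrArg (Nat.cast : ℕ → ℝ) h
      have hexp : M + 1 - (i + 1) = M - i := by omega
      rw [hexp, pow_succ]
      linear_combination (-((i : ℝ) * x ^ i * x * y ^ (M - i))) * h'
    simp only [Nat.cast_add, Nat.cast_one] at hstep ⊢
    rw [Finset.sum_congr rfl hstep, ← Finset.mul_sum, bsum1]
    have hexp2 : M + 1 - 2 = M - 1 := by omega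
    rw [hexp2]
    simp
    ring

private lemma binner (N : ℕ) (p c : ℝ) :
    ∑ j ∈ range (N + 1), (N.choose j : ℝ) * p ^ j * (1 - p) ^ (N - j) * ((j : ℝ) + c) ^ 2
      = N * p * (1 - p) + (N * p + c) ^ 2 := by
  have hpq : p + (1 - p) = 1 := by ring
  have h0 := bsum0 N p (1 - p)
  have h1 := bsum1 N p (1 - p)
  have h2 := bsum2 N p (1 - p)
  rw [hpq, one_pow] at h0 h1 h2
  have key : ∀ j ∈ range (N + 1),
      (N.choose j : ℝ) * p ^ j * (1 - p) ^ (N - j) * ((j : ℝ) + c) ^ 2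
        = ((j : ℝ) * ((j : ℝ) - 1) * (N.choose j : ℝ) * p ^ j * (1 - p) ^ (N - j))
          + (2 * c + 1) * ((j : ℝ) * (N.choose j : ℝ) * p ^ j * (1 - p) ^ (N - j))
          + c ^ 2 * ((N.choose j : ℝ) * p ^ j * (1 - p) ^ (N - j)) := by
    intro j _; ring
  rw [Finset.sum_congr rfl key, Finset.sum_add_distrib, Finset.sum_add_distrib,
    ← Finset.mul_sum, ← Finset.mul_sum, h0, h1, h2]
  ring

/-- Closed form of the expected chi-square statistic under the MGA attack. -/
theorem stmt3 (n m d l_g : ℕ) (hm : m ≤ n) (hn : 0 < n) (hl : l_g ≤ d)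
    (P : ℕ → ℝ) (hP : ∀ k ≤ d, 0 < P k ∧ P k < 1)
    (hsum : ∑ k ∈ Finset.range (d + 1), P k = 1) :
    ∑ k ∈ Finset.range (d + 1),
        (∑ j ∈ Finset.range (n - m + 1),
            ((n - m).choose j : ℝ) * P k ^ j * (1 - P k) ^ (n - m - j) *
              (((j : ℝ) + (if k = l_g then (m : ℝ) else 0)) - n * P k) ^ 2) /
          ((n : ℝ) * P k) =
      (m : ℝ) ^ 2 / n * (1 / P l_g - 1) + ((n : ℝ) - m) * d / n := by
  have hNn : ((n - m : ℕ) : ℝ) = (n : ℝ) - m := by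
    rw [Nat.cast_sub hm]
  have hn' : (n : ℝ) ≠ 0 := Nat.cast_ne_zero.mpr hn.ne'
  obtain ⟨hpl0, hpl1⟩ := hP l_g hl
  have hterm : ∀ k ∈ Finset.range (d + 1),
      (∑ j ∈ Finset.range (n - m + 1),
          ((n - m).choose j : ℝ) * P k ^ j * (1 - P k) ^ (n - m - j) *
            (((j : ℝ) + (if k = l_g then (m : ℝ) else 0)) - n * P k) ^ 2) /
        ((n : ℝ) * P k)
      = ((n : ℝ) - m) / n * (1 - P k) + (m : ℝ) ^ 2 / n * P k
        + (if k = l_g then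
            (m : ℝ) ^ 2 * (1 - P l_g) ^ 2 / (n * P l_g) - (m : ℝ) ^ 2 / n * P l_g
          else 0) := by
    intro k hk
    obtain ⟨hp0, hp1⟩ := hP k (Finset.mem_range_succ_iff.mp hk)
    have hrw : ∀ j ∈ Finset.range (n - m + 1),
        ((n - m).choose j : ℝ) * P k ^ j * (1 - P k) ^ (n - m - j) *
            (((j : ℝ) + (if k = l_g then (m : ℝ) else 0)) - n * P k) ^ 2
          = ((n - m).choose j : ℝ) * P k ^ j * (1 - P k) ^ (n - m - j) *
            ((j : ℝ) + ((if k = l_g then (m : ℝ) else 0) - n * P k)) ^ 2 := by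
      intro j _; ring
    rw [Finset.sum_congr rfl hrw, binner (n - m) (P k)
      ((if k = l_g then (m : ℝ) else 0) - n * P k), hNn]
    by_cases hkl : k = l_g
    · subst hkl
      simp only [if_pos rfl, if_true]
      field_simp
      ring
    · simp only [if_neg hkl]
      field_simp
      ring
  rw [Finset.sum_congr rfl hterm, Finset.sum_add_distrib, Finset.sum_add_distrib,
    ← Finset.mul_sum, ← Finset.mul_sum]
  have hsub : ∑ k ∈ Finset.range (d + 1), (1 - P k) = d := by
    rw [Finset.sum_sub_distrib, hsum, Finset.sum_const, Finset.card_range]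
    simp
  have hmem : l_g ∈ Finset.range (d + 1) := Finset.mem_range_succ_iff.mpr hl
  rw [hsub, hsum, Finset.sum_ite_eq' (Finset.range (d + 1)) l_g, if_pos hmem]
  field_simp
  ring
end

section
/- With the APA model above, $\sum_{k=0}^d \frac{\mathbb{E}[(O^k - nP_k)^2]}{nP_k} = \frac{1}{n}\sum_{k=0}^d \frac{(mP_k - \omega_k)^2}{P_k} + \frac{(n-m)\,d}{n}$, assuming $\sum_{k=0}^d P_k = 1$. -/
open Finset

lemma binom0 (x y : ℝ) (N : ℕ) :
    ∑ j ∈ Finset.range (N + 1), (N.choose j : ℝ) * x ^ j * y ^ (N - j) = (x + y) ^ N := by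
  rw [add_pow]
  exact Finset.sum_congr rfl fun j _ => by ring

lemma choose_key (M i : ℕ) :
    ((M + 1).choose (i + 1) : ℝ) * ((i : ℝ) + 1) = ((M : ℝ) + 1) * (M.choose i : ℝ) := by
  have h : (M + 1).choose (i + 1) * (i + 1) = (M + 1) * M.choose i :=
    (Nat.add_one_mul_choose_eq M i).symm
  exact_mod_cast h

lemma binom1 (x y : ℝ) (N : ℕ) :
    ∑ j ∈ Finset.range (N + 1), (N.choose j : ℝ) * x ^ j * y ^ (N - j) * j
      = N * x * (x + y) ^ (N - 1) := by
  cases N with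
  | zero => simp
  | succ M =>
    rw [Finset.sum_range_succ']
    simp only [Nat.cast_zero, mul_zero, add_zero]
    calc ∑ i ∈ Finset.range (M + 1),
          ((M + 1).choose (i + 1) : ℝ) * x ^ (i + 1) * y ^ (M + 1 - (i + 1)) * (i + 1 : ℕ)
        = ∑ i ∈ Finset.range (M + 1),
            ((M : ℝ) + 1) * x * ((M.choose i : ℝ) * x ^ i * y ^ (M - i)) := by
          apply Finset.sum_congr rfl
          intro i _
          have h := choose_key M i
          have hs : M + 1 - (i + 1) = M - i := by omega
          rw [hs]
          push_cast
          linear_combination x ^ (i + 1) * y ^ (M - i) * h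
      _ = ((M : ℝ) + 1) * x * (x + y) ^ M := by
          rw [← Finset.mul_sum, binom0]
      _ = (↑(M + 1)) * x * (x + y) ^ (M + 1 - 1) := by push_cast; ring_nf

lemma binom2 (x y : ℝ) (N : ℕ) :
    ∑ j ∈ Finset.range (N + 1), (N.choose j : ℝ) * x ^ j * y ^ (N - j) * ((j : ℝ) * ((j : ℝ) - 1))
      = N * ((N : ℝ) - 1) * x ^ 2 * (x + y) ^ (N - 2) := by
  cases N with
  | zero => simp
  | succ M =>
    rw [Finset.sum_range_succ']
    simp only [Nat.cast_zero]
    have step : ∑ i ∈ Finset.range (M + 1),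
          ((M + 1).choose (i + 1) : ℝ) * x ^ (i + 1) * y ^ (M + 1 - (i + 1)) *
            ((↑(i + 1) : ℝ) * ((↑(i + 1) : ℝ) - 1))
        = ((M : ℝ) + 1) * x * ∑ i ∈ Finset.range (M + 1),
            (M.choose i : ℝ) * x ^ i * y ^ (M - i) * i := by
      rw [Finset.mul_sum]
      apply Finset.sum_congr rfl
      intro i _
      have h := choose_key M i
      have hs : M + 1 - (i + 1) = M - i := by omega
      rw [hs]
      push_cast
      linear_combination (i : ℝ) * x ^ (i + 1) * y ^ (M - i) * h
    rw [show ((0:ℝ) * ((0:ℝ) - 1)) = 0 by ring] at *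
    simp only [mul_zero, add_zero]
    rw [step, binom1]
    have h2 : M + 1 - 2 = M - 1 := by omega
    rw [h2]
    push_cast
    ring

lemma binom_sq (p c : ℝ) (N : ℕ) :
    ∑ j ∈ Finset.range (N + 1),
        (N.choose j : ℝ) * p ^ j * (1 - p) ^ (N - j) * ((j : ℝ) + c) ^ 2
      = N * p * (1 - p) + ((N : ℝ) * p + c) ^ 2 := by
  have hp : p + (1 - p) = 1 := by ring
  have e : ∀ j ∈ Finset.range (N + 1),
      (N.choose j : ℝ) * p ^ j * (1 - p) ^ (N - j) * ((j : ℝ) + c) ^ 2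
      = (N.choose j : ℝ) * p ^ j * (1 - p) ^ (N - j) * ((j : ℝ) * ((j : ℝ) - 1))
        + (1 + 2 * c) * ((N.choose j : ℝ) * p ^ j * (1 - p) ^ (N - j) * j)
        + c ^ 2 * ((N.choose j : ℝ) * p ^ j * (1 - p) ^ (N - j)) := by
    intro j _; ring
  rw [Finset.sum_congr rfl e, Finset.sum_add_distrib, Finset.sum_add_distrib,
    ← Finset.mul_sum, ← Finset.mul_sum, binom0, binom1, binom2, hp, one_pow, one_pow, one_pow]
  cases N with
  | zero => push_cast; ring
  | succ M => push_cast; ring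

/-- Closed form of the expected chi-square statistic under the APA attack. -/
theorem stmt5 (n m d : ℕ) (hm : m ≤ n) (hn : 0 < n)
    (P ω : ℕ → ℝ) (hP : ∀ k ≤ d, 0 < P k ∧ P k < 1)
    (hω : ∀ k ≤ d, 0 ≤ ω k)
    (hsum : ∑ k ∈ Finset.range (d + 1), P k = 1) :
    ∑ k ∈ Finset.range (d + 1),
        (∑ j ∈ Finset.range (n - m + 1),
            ((n - m).choose j : ℝ) * P k ^ j * (1 - P k) ^ (n - m - j) *
              (((j : ℝ) + ω k) - (n : ℝ) * P k) ^ 2) /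
          ((n : ℝ) * P k) =
      (1 / (n : ℝ)) * ∑ k ∈ Finset.range (d + 1), ((m : ℝ) * P k - ω k) ^ 2 / P k +
        ((n : ℝ) - m) * d / n := by
  have hNm : ((n - m : ℕ) : ℝ) = (n : ℝ) - m := by
    push_cast [Nat.cast_sub hm]; ring
  have hstep : ∀ k ∈ Finset.range (d + 1),
      (∑ j ∈ Finset.range (n - m + 1),
          ((n - m).choose j : ℝ) * P k ^ j * (1 - P k) ^ (n - m - j) *
            (((j : ℝ) + ω k) - (n : ℝ) * P k) ^ 2) / ((n : ℝ) * P k)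
        = (1 / (n : ℝ)) * (((m : ℝ) * P k - ω k) ^ 2 / P k)
          + (((n : ℝ) - m) / n) * (1 - P k) := by
    intro k hk
    have hk' : k ≤ d := Nat.lt_succ_iff.mp (Finset.mem_range.mp hk)
    obtain ⟨hp0, hp1⟩ := hP k hk'
    have hsum2 : (∑ j ∈ Finset.range (n - m + 1),
          ((n - m).choose j : ℝ) * P k ^ j * (1 - P k) ^ (n - m - j) *
            (((j : ℝ) + ω k) - (n : ℝ) * P k) ^ 2)
        = ((n - m : ℕ) : ℝ) * P k * (1 - P k)
          + (((n - m : ℕ) : ℝ) * P k + (ω k - (n : ℝ) * P k)) ^ 2 := by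
      rw [← binom_sq (P k) (ω k - (n : ℝ) * P k) (n - m)]
      exact Finset.sum_congr rfl fun j _ => by ring
    rw [hsum2, hNm]
    have hpne : P k ≠ 0 := ne_of_gt hp0
    have hnne : (n : ℝ) ≠ 0 := Nat.cast_ne_zero.mpr hn.ne'
    field_simp
    ring
  rw [Finset.sum_congr rfl hstep, Finset.sum_add_distrib, ← Finset.mul_sum, ← Finset.mul_sum]
  have hd : ∑ k ∈ Finset.range (d + 1), (1 - P k) = (d : ℝ) := by
    rw [Finset.sum_sub_distrib, hsum]
    simp
  rw [hd]
  ring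
end

section
/- In OUE, where each bit of a length-$d$ one-hot vector is perturbed independently (the 1-bit kept as 1 with probability $p = 1/2$, each 0-bit flipped to 1 with probability $q = \frac{1}{e^\epsilon+1}$), the mechanism satisfies $\epsilon$-local differential privacy: for any two one-hot inputs $\mathbf{v}_1, \mathbf{v}_2$ and any output vector $\mathbf{y} \in \{0,1\}^d$, $\Pr[\Psi(\mathbf{v}_1) = \mathbf{y}] \le e^\epsilon \Pr[\Psi(\mathbf{v}_2) = \mathbf{y}]$. -/
/-- OUE satisfies ε-local differential privacy. -/
theorem stmt11 (d : ℕ) (ε : ℝ) (hε : 0 < ε) (p q : ℝ)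
    (hp : p = 1 / 2) (hq : q = 1 / (Real.exp ε + 1)) :
    ∀ v₁ v₂ : Fin d, ∀ y : Fin d → Bool,
      (∏ i, if i = v₁ then (if y i then p else 1 - p) else (if y i then q else 1 - q)) ≤
        Real.exp ε *
          ∏ i, if i = v₂ then (if y i then p else 1 - p) else (if y i then q else 1 - q) := by
  intro v₁ v₂ y
  have hE0 : (0:ℝ) < Real.exp ε := Real.exp_pos ε
  have hE1 : (1:ℝ) < Real.exp ε := by
    have := Real.add_one_le_exp ε; linarith
  have hq0 : 0 < q := by rw [hq]; positivity
  have hq1 : q < 1/2 := by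
    rw [hq, div_lt_iff₀ (by linarith)]; linarith
  have hqE : Real.exp ε * q = 1 - q := by
    have hne : Real.exp ε + 1 ≠ 0 := by positivity
    rw [hq]; field_simp; ring
  set f₁ : Fin d → ℝ := fun i =>
    if i = v₁ then (if y i then p else 1 - p) else (if y i then q else 1 - q) with hf₁
  set f₂ : Fin d → ℝ := fun i =>
    if i = v₂ then (if y i then p else 1 - p) else (if y i then q else 1 - q) with hf₂
  have hnn : ∀ (g : Fin d → ℝ) (s : Finset (Fin d)),
      (g = f₁ ∨ g = f₂) → 0 ≤ ∏ i ∈ s, g i := by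
    rintro g s (rfl | rfl) <;>
    · refine Finset.prod_nonneg fun i _ => ?_
      simp only [hf₁, hf₂]
      split_ifs <;> linarith
  by_cases hvv : v₁ = v₂
  · subst hvv
    have hP : 0 ≤ ∏ i, f₁ i := hnn f₁ _ (Or.inl rfl)
    nlinarith
  · have hmem : v₂ ∈ (Finset.univ : Finset (Fin d)).erase v₁ := by
      simp [Ne.symm hvv]
    have e1 : ∏ i, f₁ i =
        f₁ v₁ * (f₁ v₂ * ∏ i ∈ ((Finset.univ.erase v₁).erase v₂), f₁ i) := by
      rw [Finset.mul_prod_erase _ _ hmem, Finset.mul_prod_erase _ _ (Finset.mem_univ v₁)]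
    have hmem2 : v₁ ∈ (Finset.univ : Finset (Fin d)).erase v₂ := by
      simp [hvv]
    have e2 : ∏ i, f₂ i =
        f₂ v₂ * (f₂ v₁ * ∏ i ∈ ((Finset.univ.erase v₂).erase v₁), f₂ i) := by
      rw [Finset.mul_prod_erase _ _ hmem2, Finset.mul_prod_erase _ _ (Finset.mem_univ v₂)]
    have hset : (Finset.univ.erase v₂).erase v₁ = (Finset.univ.erase v₁).erase v₂ := by
      ext i; simp [and_comm]
    have heq : ∏ i ∈ ((Finset.univ.erase v₂).erase v₁), f₂ i =
        ∏ i ∈ ((Finset.univ.erase v₁).erase v₂), f₁ i := by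
      rw [hset]
      refine Finset.prod_congr rfl fun i hi => ?_
      simp only [Finset.mem_erase] at hi
      simp [hf₁, hf₂, hi.1, hi.2.1]
    have hP : 0 ≤ ∏ i ∈ ((Finset.univ.erase v₁).erase v₂), f₁ i :=
      hnn f₁ _ (Or.inl rfl)
    rw [e1, e2, heq]
    have h1 : f₁ v₁ = 1/2 := by cases hb : y v₁ <;> simp [hf₁, hp, hb] <;> norm_num
    have h2 : f₂ v₂ = 1/2 := by cases hb : y v₂ <;> simp [hf₂, hp, hb] <;> norm_num
    have h3 : f₁ v₂ = (if y v₂ then q else 1 - q) := by simp [hf₁, Ne.symm hvv]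
    have h4 : f₂ v₁ = (if y v₁ then q else 1 - q) := by simp [hf₂, hvv]
    rw [h1, h2, h3, h4]
    rcases Bool.eq_false_or_eq_true (y v₁) with hb1 | hb1 <;>
      rcases Bool.eq_false_or_eq_true (y v₂) with hb2 | hb2 <;>
        simp [hb1, hb2] <;>
        nlinarith [mul_nonneg (show (0:ℝ) ≤ 1 - q by linarith) hP,
          mul_nonneg hq0.le hP]
end
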